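/- arXiv:1805.02594 — 11 statements merged into one kernel-verified Lean document; each statement's English description precedes it below -/
import Mathlib

section
/- Let 𝓔 be an involutive family of binary relations on E (i.e. r ∈ 𝓔 implies r⁻¹ ∈ 𝓔). Then for every subset A of E, the diameter set δ(A) := {r ∈ 𝓔 : A × A ⊆ r} equals δ(Cov(A)), where Cov(A) is the intersection of all balls containing A. -/
open Set

variable {E : Type*}

def ball (r : Set (E × E)) (x : E) : Set E := {y | (x, y) ∈ r}

def relInv (r : Set (E × E)) : Set (E × E) := {p | (p.2, p.1) ∈ r}

def center (A : Set E) (r : Set (E × E)) : Set E := {x | A ⊆ ball r x}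

def ballsOf (𝓔 : Set (Set (E × E))) (G : Set E) : Set (Set E) :=
  {B | ∃ x ∈ G, ∃ r ∈ 𝓔, B = ball r x}

def interB (G : Set E) (𝓔 : Set (Set (E × E))) : Set (Set E) :=
  {B | ∃ S, S ⊆ ballsOf 𝓔 G ∧ B = G ∩ ⋂₀ S}

def cov (𝓔 : Set (Set (E × E))) (A : Set E) : Set E :=
  ⋂₀ {B | B ∈ ballsOf 𝓔 univ ∧ A ⊆ B}

def diamSet (𝓔 : Set (Set (E × E))) (A : Set E) : Set (Set (E × E)) :=
  {r | r ∈ 𝓔 ∧ A ×ˢ A ⊆ r}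

def radSet (𝓔 : Set (Set (E × E))) (A : Set E) : Set (Set (E × E)) :=
  {r | r ∈ 𝓔 ∧ ∃ x ∈ A, A ⊆ ball r x}

def hasFIP (𝓒 : Set (Set E)) : Prop :=
  ∀ 𝓕, 𝓕 ⊆ 𝓒 → (∀ G, G ⊆ 𝓕 → G.Finite → (⋂₀ G).Nonempty) → (⋂₀ 𝓕).Nonempty

def isInvolutive (𝓔 : Set (Set (E × E))) : Prop := ∀ r ∈ 𝓔, relInv r ∈ 𝓔

def isReflexive (𝓔 : Set (Set (E × E))) : Prop := ∀ r ∈ 𝓔, ∀ x : E, (x, x) ∈ r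

def isEndo (𝓔 : Set (Set (E × E))) (f : E → E) : Prop :=
  ∀ r ∈ 𝓔, ∀ x y : E, (x, y) ∈ r → (f x, f y) ∈ r

def olr (𝓔 : Set (Set (E × E))) (A B : Set E) : Prop :=
  ∀ x ∈ B, ∃ h : E → E, (∀ a ∈ A, h a = a) ∧ h x ∈ A ∧
    ∀ r ∈ 𝓔, ∀ u ∈ insert x A, ∀ v ∈ insert x A, (u, v) ∈ r → (h u, h v) ∈ r

def normalS (G : Set E) (𝓡 : Set (Set (E × E))) : Prop :=
  ∀ A ∈ interB G 𝓡, A.Nonempty → radSet 𝓡 A = diamSet 𝓡 A → ∃ a : E, A = {a}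

def restrRel (X : Set E) (𝓔 : Set (Set (E × E))) : Set (Set (E × E)) :=
  (fun r => r ∩ X ×ˢ X) '' 𝓔

theorem diamSet_cov (𝓔 : Set (Set (E × E))) (hinv : isInvolutive 𝓔) (A : Set E) :
    diamSet 𝓔 A = diamSet 𝓔 (cov 𝓔 A) := by
  have hsub : A ⊆ cov 𝓔 A := fun a ha => by
    intro B hB; exact hB.2 ha
  ext r
  constructor
  · rintro ⟨hr, hAA⟩
    refine ⟨hr, ?_⟩
    rintro ⟨x, y⟩ ⟨hx, hy⟩
    -- first: for a ∈ A, (a, y) ∈ r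
    have step1 : ∀ a ∈ A, (a, y) ∈ r := by
      intro a ha
      have : cov 𝓔 A ⊆ ball r a := by
        intro z hz
        exact hz (ball r a) ⟨⟨a, mem_univ a, r, hr, rfl⟩, fun b hb => hAA ⟨ha, hb⟩⟩
      exact this hy
    have : cov 𝓔 A ⊆ ball (relInv r) y := by
      intro z hz
      exact hz (ball (relInv r) y)
        ⟨⟨y, mem_univ y, relInv r, hinv r hr, rfl⟩, fun a ha => step1 a ha⟩
    exact this hx
  · rintro ⟨hr, h⟩
    exact ⟨hr, fun p hp => h ⟨hsub hp.1, hsub hp.2⟩⟩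
end

section
/- For a family 𝓔 of binary relations on E, the collection of balls 𝓑 := {B(x,r) : x ∈ E, r ∈ 𝓔} has the finite intersection property if and only if the collection of all (arbitrary) intersections of balls has the finite intersection property. -/
open Set

variable {E : Type*}

theorem fip_balls_iff_fip_interBalls (𝓔 : Set (Set (E × E))) :
    hasFIP (ballsOf 𝓔 univ) ↔ hasFIP {B | ∃ S, S ⊆ ballsOf 𝓔 univ ∧ B = ⋂₀ S} := by
  constructor
  · intro h 𝓕 h𝓕 hfin
    choose S hS hEq using fun F (hF : F ∈ 𝓕) => h𝓕 hF
    set 𝓕' : Set (Set E) := ⋃ (F : Set E) (hF : F ∈ 𝓕), S F hF with h𝓕'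
    have hsub : 𝓕' ⊆ ballsOf 𝓔 univ := by
      intro B hB
      simp only [h𝓕', mem_iUnion] at hB
      obtain ⟨F, hF, hB⟩ := hB
      exact hS F hF hB
    have key : (⋂₀ 𝓕').Nonempty := by
      apply h 𝓕' hsub
      intro G hG hGfin
      -- each g ∈ G comes from some F ∈ 𝓕
      have hchoice : ∀ g ∈ G, ∃ F, ∃ hF : F ∈ 𝓕, g ∈ S F hF := by
        intro g hg
        have := hG hg
        simp only [h𝓕', mem_iUnion] at this
        exact this
      choose Fg hFg hgS using hchoice
      -- the finite family of chosen F's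
      have himg : (Set.image (fun p : {g // g ∈ G} => Fg p.1 p.2)
          (univ : Set {g // g ∈ G})).Finite := by
        have : Finite {g // g ∈ G} := hGfin.to_subtype
        exact (Set.finite_univ).image _
      set T := Set.image (fun p : {g // g ∈ G} => Fg p.1 p.2)
          (univ : Set {g // g ∈ G}) with hT
      have hTsub : T ⊆ 𝓕 := by
        rintro F ⟨⟨g, hg⟩, -, rfl⟩
        exact hFg g hg
      obtain ⟨x, hx⟩ := hfin T hTsub himg
      refine ⟨x, ?_⟩
      intro g hg
      have hxF : x ∈ Fg g hg := hx _ ⟨⟨g, hg⟩, mem_univ _, rfl⟩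
      rw [hEq (Fg g hg) (hFg g hg)] at hxF
      exact hxF _ (hgS g hg)
    obtain ⟨x, hx⟩ := key
    refine ⟨x, ?_⟩
    intro F hF
    rw [hEq F hF]
    intro B hB
    exact hx B (by simp only [h𝓕', mem_iUnion]; exact ⟨F, hF, hB⟩)
  · intro h 𝓕 h𝓕 hfin
    apply h 𝓕 _ hfin
    intro B hB
    exact ⟨{B}, by simpa using h𝓕 hB, by simp⟩
end

section
/- Let f be an endomorphism of an involutive binary relational system (E,𝓔) and let A be a nonempty intersection of balls that is preserved by f (f(A) ⊆ A) and minimal (with respect to inclusion) among nonempty intersections of balls preserved by f. Then A is equally centered, i.e. the radius set r(A) := {r ∈ 𝓔 : ∃x ∈ A, A ⊆ B(x,r)} equals the diameter set δ(A) := {r ∈ 𝓔 : A × A ⊆ r}. -/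
open Set

variable {E : Type*}

theorem minimal_invariant_is_equally_centered (𝓔 : Set (Set (E × E)))
    (hinv : isInvolutive 𝓔) (f : E → E) (hf : isEndo 𝓔 f)
    (A : Set E) (hA : A ∈ interB univ 𝓔) (hne : A.Nonempty) (hpres : MapsTo f A A)
    (hmin : ∀ A' ∈ interB univ 𝓔, A'.Nonempty → MapsTo f A' A' → A' ⊆ A → A' = A) :
    radSet 𝓔 A = diamSet 𝓔 A := by
  ext r
  simp only [radSet, diamSet, mem_setOf_eq]
  constructor
  · rintro ⟨hr, x, hxA, hxball⟩
    obtain ⟨S, hS, hAeq⟩ := hA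
    have hmemA : ∀ z : E, z ∈ A ↔ ∀ B ∈ S, z ∈ B := by
      intro z
      rw [hAeq]
      simp [mem_sInter]
    refine ⟨hr, ?_⟩
    set C := {z | z ∈ A ∧ ∀ a ∈ A, (z, a) ∈ r} with hCdef
    have hCsub : C ⊆ A := fun z hz => hz.1
    have hCmaps : MapsTo f C C := by
      intro y hy
      obtain ⟨hyA, hyr⟩ := hy
      set A'' := {a | a ∈ A ∧ (f y, a) ∈ r} with hA''def
      have hA''eq : A'' = A := by
        apply hmin
        · refine ⟨insert (ball r (f y)) S, ?_, ?_⟩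
          · rintro B (rfl | hB)
            · exact ⟨f y, mem_univ _, r, hr, rfl⟩
            · exact hS hB
          · ext z
            simp only [hA''def, mem_setOf_eq, mem_inter_iff, mem_univ, true_and,
              mem_sInter, mem_insert_iff]
            constructor
            · rintro ⟨hz, hzr⟩ B (rfl | hB)
              · exact hzr
              · exact (hmemA z).mp hz B hB
            · intro h
              exact ⟨(hmemA z).mpr fun B hB => h B (Or.inr hB), h _ (Or.inl rfl)⟩
        · exact ⟨f x, hpres hxA, hf r hr y x (hyr x hxA)⟩
        · rintro a ⟨haA, _⟩
          exact ⟨hpres haA, hf r hr y a (hyr a haA)⟩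
        · exact fun a ha => ha.1
      refine ⟨hpres hyA, fun a haA => ?_⟩
      have : a ∈ A'' := hA''eq.symm ▸ haA
      exact this.2
    have hCeq : C = A := by
      apply hmin
      · refine ⟨S ∪ ((fun a => ball (relInv r) a) '' A), ?_, ?_⟩
        · rintro B (hB | ⟨a, haA, rfl⟩)
          · exact hS hB
          · exact ⟨a, mem_univ _, relInv r, hinv r hr, rfl⟩
        · ext z
          simp only [hCdef, mem_setOf_eq, mem_inter_iff, mem_univ, true_and,
            mem_sInter, mem_union, mem_image]
          constructor
          · rintro ⟨hz, hzr⟩ B (hB | ⟨a, haA, rfl⟩)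
            · exact (hmemA z).mp hz B hB
            · exact hzr a haA
          · intro h
            refine ⟨(hmemA z).mpr fun B hB => h B (Or.inl hB), fun a haA => ?_⟩
            exact h (ball (relInv r) a) (Or.inr ⟨a, haA, rfl⟩)
      · exact ⟨x, hxA, fun a haA => hxball haA⟩
      · exact hCmaps
      · exact hCsub
    rintro ⟨u, v⟩ ⟨hu, hv⟩
    have : u ∈ C := hCeq.symm ▸ hu
    exact this.2 v hv
  · rintro ⟨hr, hsub⟩
    obtain ⟨x, hx⟩ := hne
    exact ⟨hr, x, hx, fun a ha => hsub (mk_mem_prod hx ha)⟩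
end

section
/- If a binary relational system (E,𝓔) has a compact structure (the balls have the finite intersection property), then for every endomorphism f, every nonempty intersection of balls preserved by f contains a minimal (by inclusion) nonempty intersection of balls preserved by f. -/
open Set

variable {E : Type*}

theorem exists_minimal_invariant_interBall (𝓔 : Set (Set (E × E)))
    (hcpt : hasFIP (ballsOf 𝓔 univ)) (f : E → E) (hf : isEndo 𝓔 f)
    (A : Set E) (hA : A ∈ interB univ 𝓔) (hne : A.Nonempty) (hpres : MapsTo f A A) :
    ∃ A' ∈ interB univ 𝓔, A' ⊆ A ∧ A'.Nonempty ∧ MapsTo f A' A' ∧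
      ∀ A'' ∈ interB univ 𝓔, A''.Nonempty → MapsTo f A'' A'' → A'' ⊆ A' → A'' = A' := by
  classical
  set 𝓢 : Set (Set E) :=
    {X | X ∈ interB univ 𝓔 ∧ X ⊆ A ∧ X.Nonempty ∧ MapsTo f X X} with h𝓢
  have key : ∀ c ⊆ 𝓢, IsChain (· ⊆ ·) c → c.Nonempty → ∃ lb ∈ 𝓢, ∀ s ∈ c, lb ⊆ s := by
    intro c hc hchain hcne
    -- choose a witness family of balls for each member of the chain
    have hwit : ∀ X : c, ∃ S, S ⊆ ballsOf 𝓔 univ ∧ (X : Set E) = univ ∩ ⋂₀ S :=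
      fun X => (hc X.2).1
    choose Sfun hSsub hSeq using hwit
    set T : Set (Set E) := ⋃ X : c, Sfun X with hT
    have hTsub : T ⊆ ballsOf 𝓔 univ := by
      rintro B hB
      simp only [hT, mem_iUnion] at hB
      obtain ⟨X, hX⟩ := hB
      exact hSsub X hX
    have hInter : ⋂₀ c = univ ∩ ⋂₀ T := by
      apply Set.eq_of_subset_of_subset
      · rintro x hx
        refine ⟨trivial, ?_⟩
        rintro B hB
        simp only [hT, mem_iUnion] at hB
        obtain ⟨X, hX⟩ := hB
        have hxX : x ∈ (X : Set E) := hx X X.2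
        rw [hSeq X] at hxX
        exact hxX.2 B hX
      · rintro x ⟨-, hx⟩ X hX
        rw [show X = univ ∩ ⋂₀ Sfun ⟨X, hX⟩ from hSeq ⟨X, hX⟩]
        exact ⟨trivial, fun B hB => hx B (mem_iUnion.2 ⟨⟨X, hX⟩, hB⟩)⟩
    -- nonemptiness via FIP
    have hmain : ∀ G : Set (Set E), G.Finite → (∀ B ∈ G, ∃ t ∈ c, t ⊆ B) →
        ∃ t ∈ c, t ⊆ ⋂₀ G := by
      intro G hGfin
      refine Set.Finite.induction_on G hGfin ?_ ?_
      · intro _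
        obtain ⟨t, ht⟩ := hcne
        exact ⟨t, ht, by simp⟩
      · rintro B G hBG hGfin ih hcover
        obtain ⟨t₁, ht₁c, ht₁⟩ := hcover B (mem_insert _ _)
        obtain ⟨t₂, ht₂c, ht₂⟩ := ih (fun B hB => hcover B (Set.mem_insert_of_mem _ hB))
        rcases hchain.total ht₁c ht₂c with h | h
        · exact ⟨t₁, ht₁c, by
            rw [sInter_insert]
            exact subset_inter ht₁ (h.trans ht₂)⟩
        · exact ⟨t₂, ht₂c, by
            rw [sInter_insert]
            exact subset_inter (h.trans ht₁) ht₂⟩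
    have hfin : ∀ G, G ⊆ T → G.Finite → (⋂₀ G).Nonempty := by
      intro G hG hGfin
      have hcover : ∀ B ∈ G, ∃ t ∈ c, t ⊆ B := by
        intro B hB
        have := hG hB
        simp only [hT, mem_iUnion] at this
        obtain ⟨X, hX⟩ := this
        refine ⟨X, X.2, ?_⟩
        rw [hSeq X]
        exact fun y hy => hy.2 B hX
      obtain ⟨t, htc, hts⟩ := hmain G hGfin hcover
      obtain ⟨x, hx⟩ := (hc htc).2.2.1
      exact ⟨x, hts hx⟩
    have hne' : (⋂₀ c).Nonempty := by
      rw [hInter]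
      simpa using hcpt T hTsub hfin
    obtain ⟨t₀, ht₀⟩ := hcne
    refine ⟨⋂₀ c, ⟨⟨T, hTsub, hInter⟩, ?_, hne', ?_⟩, fun s hs => sInter_subset_of_mem hs⟩
    · exact (sInter_subset_of_mem ht₀).trans (hc ht₀).2.1
    · intro x hx X hX
      exact (hc hX).2.2.2 (hx X hX)
  obtain ⟨m, hmA, hm, hmin⟩ := zorn_superset_nonempty 𝓢 key A ⟨hA, subset_rfl, hne, hpres⟩
  exact ⟨m, hm.1, hmA, hm.2.2.1, hm.2.2.2, fun A'' hA''1 hA''2 hA''3 hsub =>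
    subset_antisymm hsub (hmin ⟨hA''1, hsub.trans hm.2.1, hA''2, hA''3⟩ hsub)⟩
end

section
/- Let (E,𝓔) be a reflexive and involutive binary relational system and A ⊆ E. If for every family of balls with centers in A and radii in 𝓔 whose intersection over E is nonempty the intersection also meets A, then the restriction of (E,𝓔) to A is a one-local retract of (E,𝓔). -/
open Set

variable {E : Type*}

theorem ball_property_implies_olr (𝓔 : Set (Set (E × E))) (A : Set E)
    (hrefl : isReflexive 𝓔) (hinv : isInvolutive 𝓔)
    (hball : ∀ S, S ⊆ {B | ∃ x ∈ A, ∃ r ∈ 𝓔, B = ball r x} →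
      (⋂₀ S).Nonempty → (A ∩ ⋂₀ S).Nonempty) :
    olr 𝓔 A univ := by
  intro x _
  classical
  by_cases hxA : x ∈ A
  · exact ⟨id, fun a _ => rfl, hxA, fun r _ u _ v _ h => h⟩
  · set S : Set (Set E) := {B | ∃ a ∈ A, ∃ r ∈ 𝓔, x ∈ ball r a ∧ B = ball r a} with hS
    have hsub : S ⊆ {B | ∃ a ∈ A, ∃ r ∈ 𝓔, B = ball r a} := by
      rintro B ⟨a, ha, r, hr, _, hB⟩; exact ⟨a, ha, r, hr, hB⟩
    have hxS : x ∈ ⋂₀ S := by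
      rintro B ⟨a, ha, r, hr, hxb, rfl⟩; exact hxb
    obtain ⟨x', hx'A, hx'S⟩ := hball S hsub ⟨x, hxS⟩
    refine ⟨fun y => if y = x then x' else y, fun a ha => if_neg (by rintro rfl; exact hxA ha),
      by simp [hx'A], ?_⟩
    intro r hr u hu v hv huv
    by_cases hux : u = x <;> by_cases hvx : v = x
    · subst hux; subst hvx; simpa using hrefl r hr x'
    · subst hux
      have hvA : v ∈ A := hv.resolve_left hvx
      have : ball (relInv r) v ∈ S := ⟨v, hvA, relInv r, hinv r hr, huv, rfl⟩
      have := hx'S _ this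
      simp only [if_pos rfl, if_neg hvx]
      exact this
    · subst hvx
      have huA : u ∈ A := hu.resolve_left hux
      have : ball r u ∈ S := ⟨u, huA, r, hr, huv, rfl⟩
      have := hx'S _ this
      simp only [if_pos rfl, if_neg hux]
      exact this
    · simpa [if_neg hux, if_neg hvx] using huv
end

section
/- One-local retraction is transitive: if A ⊆ B ⊆ E, the restriction of (E,𝓔) to A is a one-local retract of the restriction to B, and the restriction to B is a one-local retract of (E,𝓔), then the restriction to A is a one-local retract of (E,𝓔). -/
open Set

variable {E : Type*}

theorem olr_trans (𝓔 : Set (Set (E × E))) (A B : Set E) (hAB : A ⊆ B)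
    (h1 : olr 𝓔 A B) (h2 : olr 𝓔 B univ) : olr 𝓔 A univ := by
  intro x _
  obtain ⟨g, hgB, hgx, hg⟩ := h2 x (mem_univ x)
  obtain ⟨h, hhA, hhx, hh⟩ := h1 (g x) hgx
  refine ⟨h ∘ g, fun a ha => by simp [hgB a (hAB ha), hhA a ha], hhx, ?_⟩
  intro r hr u hu v hv huv
  have hmem : ∀ w ∈ insert x A, g w ∈ insert (g x) A := by
    rintro w (rfl | hw)
    · exact mem_insert _ _
    · rw [hgB w (hAB hw)]; exact mem_insert_of_mem _ hw
  have h1 : (g u, g v) ∈ r := by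
    refine hg r hr u ?_ v ?_ huv
    · rcases hu with rfl | hu
      · exact mem_insert _ _
      · exact mem_insert_of_mem _ (hAB hu)
    · rcases hv with rfl | hv
      · exact mem_insert _ _
      · exact mem_insert_of_mem _ (hAB hv)
  exact hh r hr (g u) (hmem u hu) (g v) (hmem v hv) h1
end

section
/- If the restriction of a binary relational system (E,𝓔) to X is a one-local retract and (E,𝓔) has a compact structure (the balls have the finite intersection property), then the restriction to X also has a compact structure. -/
open Set

variable {E : Type*}

theorem olr_compact (𝓔 : Set (Set (E × E))) (X : Set E)
    (holr : olr 𝓔 X univ) (hcpt : hasFIP (ballsOf 𝓔 univ)) :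
    hasFIP (ballsOf (restrRel X 𝓔) X) := by
  intro 𝓕 h𝓕 hfin
  obtain ⟨e, -⟩ := hfin ∅ (empty_subset _) finite_empty
  have hch : ∀ B : Set E, ∃ p : E × Set (E × E), B ∈ 𝓕 →
      p.1 ∈ X ∧ p.2 ∈ 𝓔 ∧ B = ball p.2 p.1 ∩ X := by
    intro B
    by_cases hB : B ∈ 𝓕
    · obtain ⟨x, hx, r', ⟨r, hr, rfl⟩, rfl⟩ := h𝓕 hB
      refine ⟨(x, r), fun _ => ⟨hx, hr, ?_⟩⟩
      ext y
      simp only [ball, mem_setOf_eq, mem_inter_iff, Set.mem_prod]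
      tauto
    · exact ⟨(e, ∅), fun h => absurd h hB⟩
  choose p hp using hch
  set xB : Set E → E := fun B => (p B).1 with hxBdef
  set rB : Set E → Set (E × E) := fun B => (p B).2 with hrBdef
  have hxB : ∀ B ∈ 𝓕, xB B ∈ X := fun B hB => (hp B hB).1
  have hrB : ∀ B ∈ 𝓕, rB B ∈ 𝓔 := fun B hB => (hp B hB).2.1
  have hBeq : ∀ B ∈ 𝓕, B = ball (rB B) (xB B) ∩ X := fun B hB => (hp B hB).2.2
  set f : Set E → Set E := fun B => ball (rB B) (xB B) with hf
  have hsub : ∀ B ∈ 𝓕, B ⊆ f B := by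
    intro B hB y hy
    rw [hBeq B hB] at hy
    exact hy.1
  have h𝓕' : f '' 𝓕 ⊆ ballsOf 𝓔 univ := by
    rintro _ ⟨B, hB, rfl⟩
    exact ⟨xB B, mem_univ _, rB B, hrB B hB, rfl⟩
  obtain ⟨z, hz⟩ : (⋂₀ (f '' 𝓕)).Nonempty := by
    apply hcpt _ h𝓕'
    intro G hG hGfin
    obtain ⟨G₀, hG₀, hG₀fin, rfl⟩ :=
      Set.exists_subset_image_finite_and.mp ⟨G, hG, hGfin, rfl⟩
    obtain ⟨y, hy⟩ := hfin G₀ hG₀ hG₀fin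
    refine ⟨y, ?_⟩
    rintro _ ⟨B, hB, rfl⟩
    exact hsub B (hG₀ hB) (hy B hB)
  obtain ⟨h, hfix, hhz, hendo⟩ := holr z (mem_univ z)
  refine ⟨h z, ?_⟩
  intro B hB
  have hzB : z ∈ f B := hz _ ⟨B, hB, rfl⟩
  have : (h (xB B), h z) ∈ rB B :=
    hendo (rB B) (hrB B hB) (xB B) (Or.inr (hxB B hB)) z (Or.inl rfl) hzB
  rw [hfix (xB B) (hxB B hB)] at this
  rw [hBeq B hB]
  exact ⟨this, hhz⟩
end

section
/- If (E,𝓔) is involutive, has a normal structure, and the restriction to X is a one-local retract of (E,𝓔), then the restriction to X has a normal structure. -/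
open Set

variable {E : Type*}

theorem olr_normal (𝓔 : Set (Set (E × E))) (X : Set E)
    (hinv : isInvolutive 𝓔) (hnorm : normalS univ 𝓔) (holr : olr 𝓔 X univ) :
    normalS X (restrRel X 𝓔) := by
  intro A hA hAne hrad
  obtain ⟨S, hSsub, hAeq⟩ := hA
  have hAX : A ⊆ X := by rw [hAeq]; exact inter_subset_left
  set C := cov 𝓔 A with hC
  have hAC : A ⊆ C := by
    intro a ha B hB
    exact hB.2 ha
  have hCne : C.Nonempty := hAne.mono hAC
  have hCball : ∀ y : E, ∀ r ∈ 𝓔, A ⊆ ball r y → C ⊆ ball r y := by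
    intro y r hr hsub u hu
    exact hu (ball r y) ⟨⟨y, mem_univ y, r, hr, rfl⟩, hsub⟩
  have hCin : C ∈ interB univ 𝓔 := by
    refine ⟨{B | B ∈ ballsOf 𝓔 univ ∧ A ⊆ B}, fun B hB => hB.1, ?_⟩
    rw [univ_inter]; rfl
  have hCrd : radSet 𝓔 C = diamSet 𝓔 C := by
    apply Subset.antisymm
    · rintro r ⟨hr, x, hxC, hCx⟩
      obtain ⟨h, hfix, hhxX, hhom⟩ := holr x (mem_univ x)
      have hhxA : h x ∈ A := by
        rw [hAeq]
        refine ⟨hhxX, ?_⟩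
        intro B hB
        obtain ⟨xB, hxBX, ρ, hρ, rfl⟩ := hSsub hB
        obtain ⟨s, hs, rfl⟩ := hρ
        have hAB : A ⊆ ball s xB := by
          intro a ha
          rw [hAeq] at ha
          exact (ha.2 _ hB).1
        have hxBx : (xB, x) ∈ s := hCball xB s hs hAB hxC
        have := hhom s hs xB (mem_insert_of_mem _ hxBX) x (mem_insert _ _) hxBx
        rw [hfix xB hxBX] at this
        exact ⟨this, hxBX, hhxX⟩
      have hAhx : A ⊆ ball r (h x) := by
        intro a ha
        have hxa : (x, a) ∈ r := hCx (hAC ha)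
        have := hhom r hr x (mem_insert _ _) a (mem_insert_of_mem _ (hAX ha)) hxa
        rwa [hfix a (hAX ha)] at this
      have hr' : r ∩ X ×ˢ X ∈ radSet (restrRel X 𝓔) A := by
        refine ⟨⟨r, hr, rfl⟩, h x, hhxA, ?_⟩
        intro a ha
        exact ⟨hAhx ha, hAX hhxA, hAX ha⟩
      rw [hrad] at hr'
      have hAAr : A ×ˢ A ⊆ r := fun p hp => (hr'.2 hp).1
      have step : ∀ u ∈ C, ∀ a ∈ A, (a, u) ∈ r := by
        intro u hu a ha
        exact hCball a r hr (fun b hb => hAAr ⟨ha, hb⟩) hu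
      refine ⟨hr, ?_⟩
      rintro ⟨u, v⟩ ⟨hu, hv⟩
      have hsub : C ⊆ ball (relInv r) v :=
        hCball v (relInv r) (hinv r hr) (fun a ha => step v hv a ha)
      exact hsub hu
    · rintro r ⟨hr, hAA⟩
      obtain ⟨x, hx⟩ := hCne
      exact ⟨hr, x, hx, fun y hy => hAA ⟨hx, hy⟩⟩
  obtain ⟨a, haC⟩ := hnorm C hCin hCne hCrd
  refine ⟨a, Subset.antisymm (haC ▸ hAC) ?_⟩
  obtain ⟨b, hb⟩ := hAne
  have hba : b = a := by
    have := hAC hb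
    rwa [haC, mem_singleton_iff] at this
  intro y hy
  rw [mem_singleton_iff] at hy
  rw [hy, ← hba]
  exact hb
end

section
/- In a partially ordered set P, every nonempty down-directed subset has an infimum if and only if every nonempty totally ordered subset (chain) has an infimum. -/
open Cardinal Set

namespace DownDirectedInfAux

variable {P : Type*} [PartialOrder P]

/-- Stages of the directed closure: repeatedly add chosen lower bounds of pairs. -/
def stage (lb : P → P → P) (T : Set P) : ℕ → Set P
  | 0 => T
  | n + 1 => stage lb T n ∪ Set.image2 lb (stage lb T n) (stage lb T n)

lemma stage_mono_set (lb : P → P → P) {T₁ T₂ : Set P} (h : T₁ ⊆ T₂) :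
    ∀ n, stage lb T₁ n ⊆ stage lb T₂ n
  | 0 => h
  | n + 1 => Set.union_subset_union (stage_mono_set lb h n)
      (Set.image2_subset (stage_mono_set lb h n) (stage_mono_set lb h n))

lemma stage_mono_nat (lb : P → P → P) (T : Set P) : Monotone (stage lb T) :=
  monotone_nat_of_le_succ fun _ => Set.subset_union_left

variable {D : Set P} {lb : P → P → P}

lemma stage_subset_D (hlb : ∀ a b, a ∈ D → b ∈ D → lb a b ∈ D ∧ lb a b ≤ a ∧ lb a b ≤ b)
    {T : Set P} (hT : T ⊆ D) : ∀ n, stage lb T n ⊆ D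
  | 0 => hT
  | n + 1 => by
      rintro x (hx | hx)
      · exact stage_subset_D hlb hT n hx
      · obtain ⟨a, ha, b, hb, rfl⟩ := hx
        exact (hlb a b (stage_subset_D hlb hT n ha) (stage_subset_D hlb hT n hb)).1

/-- The directed closure of `T` inside `D`. -/
def cl (lb : P → P → P) (D T : Set P) : Set P := ⋃ n, stage lb (T ∩ D) n

lemma subset_cl (lb : P → P → P) (D T : Set P) : T ∩ D ⊆ cl lb D T :=
  (Set.subset_iUnion (fun n => stage lb (T ∩ D) n) 0)

lemma cl_subset_D (hlb : ∀ a b, a ∈ D → b ∈ D → lb a b ∈ D ∧ lb a b ≤ a ∧ lb a b ≤ b)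
    (T : Set P) : cl lb D T ⊆ D :=
  Set.iUnion_subset fun n => stage_subset_D hlb Set.inter_subset_right n

lemma cl_mono (lb : P → P → P) (D : Set P) {T₁ T₂ : Set P} (h : T₁ ⊆ T₂) :
    cl lb D T₁ ⊆ cl lb D T₂ :=
  Set.iUnion_mono fun n => stage_mono_set lb (Set.inter_subset_inter_left D h) n

lemma cl_directed (hlb : ∀ a b, a ∈ D → b ∈ D → lb a b ∈ D ∧ lb a b ≤ a ∧ lb a b ≤ b)
    (T : Set P) : DirectedOn (· ≥ ·) (cl lb D T) := by
  intro a ha b hb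
  rw [cl, Set.mem_iUnion] at ha hb
  obtain ⟨m, ham⟩ := ha
  obtain ⟨n, hbn⟩ := hb
  have ha' : a ∈ stage lb (T ∩ D) (max m n) := stage_mono_nat lb _ (le_max_left m n) ham
  have hb' : b ∈ stage lb (T ∩ D) (max m n) := stage_mono_nat lb _ (le_max_right m n) hbn
  have haD : a ∈ D := stage_subset_D hlb Set.inter_subset_right _ ha'
  have hbD : b ∈ D := stage_subset_D hlb Set.inter_subset_right _ hb'
  refine ⟨lb a b, ?_, (hlb a b haD hbD).2.1, (hlb a b haD hbD).2.2⟩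
  exact Set.mem_iUnion.mpr ⟨max m n + 1, Or.inr (Set.mem_image2_of_mem ha' hb')⟩

lemma mk_stage_le (lb : P → P → P) (T : Set P) (n : ℕ) :
    #(stage lb T n) ≤ max #T ℵ₀ := by
  induction n with
  | zero => exact le_max_left _ _
  | succ n ih =>
    have hmul : #(Set.image2 lb (stage lb T n) (stage lb T n)) ≤ max #T ℵ₀ :=
      Cardinal.mk_image2_le.trans <| (Cardinal.mul_le_max _ _).trans <| by
        simp only [sup_le_iff]
        exact ⟨⟨ih, ih⟩, le_max_right _ _⟩
    refine (Cardinal.mk_union_le _ _).trans ?_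
    refine (Cardinal.add_le_max _ _).trans ?_
    simp only [sup_le_iff]
    exact ⟨⟨ih, hmul⟩, le_max_right _ _⟩

lemma mk_cl_le (lb : P → P → P) (D T : Set P) : #(cl lb D T) ≤ max #T ℵ₀ := by
  have hre : cl lb D T = ⋃ m : ULift.{_} ℕ, stage lb (T ∩ D) m.down := by
    rw [cl]
    exact (Set.iUnion_congr_of_surjective _ (fun n : ℕ => ⟨(ULift.up n), rfl⟩)
      (fun m => rfl)).symm
  rw [hre]
  refine (Cardinal.mk_iUnion_le _).trans ?_
  have h1 : ⨆ m : ULift ℕ, #(stage lb (T ∩ D) m.down) ≤ max #T ℵ₀ :=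
    ciSup_le fun m => (mk_stage_le lb _ m.down).trans
      (max_le_max (Cardinal.mk_le_mk_of_subset Set.inter_subset_left) le_rfl)
  calc #(ULift ℕ) * ⨆ m : ULift ℕ, #(stage lb (T ∩ D) m.down)
      ≤ ℵ₀ * (max #T ℵ₀) := by
        rw [Cardinal.mk_denumerable]; exact mul_le_mul_right h1 _
    _ ≤ max #T ℵ₀ := by
        exact (Cardinal.mul_le_max _ _).trans
          (sup_le (sup_le le_sup_right le_rfl) le_sup_right)

/-- The decreasing sequence used in the countable case. -/
def seq (lb : P → P → P) (d : ℕ → P) : ℕ → P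
  | 0 => d 0
  | n + 1 => lb (seq lb d n) (d (n + 1))

lemma glb_of_chains (hC : ∀ C : Set P, C.Nonempty → IsChain (· ≤ ·) C → ∃ a, IsGLB C a)
    (κ : Cardinal) : ∀ D : Set P, #↥D ≤ κ → D.Nonempty → DirectedOn (· ≥ ·) D →
      ∃ a, IsGLB D a := by
  induction κ using WellFoundedLT.induction with
  | _ κ IH =>
  intro D hcard hne hdir
  rcases lt_or_eq_of_le hcard with hlt | rfl
  · exact IH _ hlt D le_rfl hne hdir
  -- choice of lower bounds for pairs in D
  have hlbex : ∀ a b : P, ∃ c, a ∈ D → b ∈ D → c ∈ D ∧ c ≤ a ∧ c ≤ b := by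
    intro a b
    by_cases hab : a ∈ D ∧ b ∈ D
    · obtain ⟨c, hc, h1, h2⟩ := hdir a hab.1 b hab.2
      exact ⟨c, fun _ _ => ⟨hc, h1, h2⟩⟩
    · exact ⟨a, fun ha hb => absurd ⟨ha, hb⟩ hab⟩
  choose lb hlb using hlbex
  by_cases hfin : D.Finite
  · -- finite case: D has a least element
    obtain ⟨m, hm, hmin⟩ : ∃ m ∈ D, ∀ c ∈ D, c ≤ m → m = c := by
      obtain ⟨m, hm, hmin⟩ := hfin.isPWO.exists_minimal hne
      exact ⟨m, hm, fun c hc h => le_antisymm (hmin hc h) h⟩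
    refine ⟨m, IsLeast.isGLB ⟨hm, fun d hd => ?_⟩⟩
    obtain ⟨c, hc, h1, h2⟩ := hdir m hm d hd
    have : m = c := hmin c hc h1
    exact this ▸ h2
  · have hDinf : D.Infinite := hfin
    have haleph : ℵ₀ ≤ #↥D := by
      have := hDinf.to_subtype
      exact Cardinal.aleph0_le_mk ↥D
    rcases eq_or_lt_of_le haleph with hcount | huncount
    · -- countable case
      have hcnt : Countable ↥D := Cardinal.mk_le_aleph0_iff.mp hcount.ge
      have hinf' : Infinite ↥D := hDinf.to_subtype
      obtain ⟨den⟩ : Nonempty (Denumerable ↥D) := nonempty_denumerable_iff.mpr ⟨hcnt, hinf'⟩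
      let e : ℕ ≃ ↥D := (den.eqv ↥D).symm
      set d : ℕ → P := fun n => (e n : P) with hd
      have hdD : ∀ n, d n ∈ D := fun n => (e n).2
      have hseqD : ∀ n, seq lb d n ∈ D := by
        intro n
        induction n with
        | zero => exact hdD 0
        | succ n ih => exact (hlb _ _ ih (hdD (n + 1))).1
      have hdec : ∀ n, seq lb d (n + 1) ≤ seq lb d n :=
        fun n => (hlb _ _ (hseqD n) (hdD (n + 1))).2.1
      have hanti : Antitone (seq lb d) := antitone_nat_of_succ_le hdec
      have hled : ∀ n, seq lb d n ≤ d n := by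
        intro n
        cases n with
        | zero => exact le_rfl
        | succ n => exact (hlb _ _ (hseqD n) (hdD (n + 1))).2.2
      have hchain : IsChain (· ≤ ·) (Set.range (seq lb d)) := by
        rintro _ ⟨m, rfl⟩ _ ⟨n, rfl⟩ _
        rcases le_total m n with h | h
        · exact Or.inr (hanti h)
        · exact Or.inl (hanti h)
      obtain ⟨a, ha⟩ := hC _ (Set.range_nonempty _) hchain
      refine ⟨a, fun x hx => ?_, fun c hc => ha.2 ?_⟩
      · obtain ⟨n, hn⟩ := e.surjective ⟨x, hx⟩
        have hdx : d n = x := congrArg Subtype.val hn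
        calc a ≤ seq lb d n := ha.1 ⟨n, rfl⟩
          _ ≤ d n := hled n
          _ = x := hdx
      · rintro _ ⟨n, rfl⟩
        exact hc (hseqD n)
    · -- uncountable case
      obtain ⟨e⟩ : Nonempty ((#↥D).ord.ToType ≃ ↥D) :=
        Cardinal.eq.mp (Cardinal.mk_ord_toType _)
      set T : (#↥D).ord.ToType → Set P := fun i => (fun j => ((e j : P))) '' Set.Iic i with hT
      set f : (#↥D).ord.ToType → Set P := fun i => cl lb D (T i) with hf
      have hfD : ∀ i, f i ⊆ D := fun i => cl_subset_D hlb _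
      have hfne : ∀ i, (f i).Nonempty := fun i =>
        ⟨e i, subset_cl _ _ _ ⟨⟨i, Set.self_mem_Iic, rfl⟩, (e i).2⟩⟩
      have hfdir : ∀ i, DirectedOn (· ≥ ·) (f i) := fun i => cl_directed hlb _
      have hflt : ∀ i, #↥(f i) < #↥D := by
        intro i
        have h1 : #↥(T i) ≤ #↥(Set.Iic i) := Cardinal.mk_image_le
        have h2 : #↥(Set.Iic i) < #↥D := by
          rw [← Set.Iio_insert]
          refine (Cardinal.mk_insert_le).trans_lt ?_
          rcases lt_or_ge (#↥(Set.Iio i)) ℵ₀ with hsmall | hbig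
          · exact (Cardinal.add_lt_aleph0 hsmall Cardinal.one_lt_aleph0).trans_le haleph
          · rw [Cardinal.add_one_eq hbig]
            exact Cardinal.mk_Iio_ord_toType i
        refine (mk_cl_le lb D (T i)).trans_lt ?_
        exact max_lt (h1.trans_lt h2) huncount
      have ha : ∀ i, ∃ a, IsGLB (f i) a :=
        fun i => IH _ (hflt i) _ le_rfl (hfne i) (hfdir i)
      choose a haglb using ha
      have hfmono : ∀ i j, i ≤ j → f i ⊆ f j := fun i j h =>
        cl_mono lb D (Set.image_mono (Set.Iic_subset_Iic.mpr h))
      have hanti : ∀ i j, i ≤ j → a j ≤ a i := fun i j h =>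
        (haglb i).2 fun x hx => (haglb j).1 (hfmono i j h hx)
      have hchain : IsChain (· ≤ ·) (Set.range a) := by
        rintro _ ⟨i, rfl⟩ _ ⟨j, rfl⟩ _
        rcases le_total i j with h | h
        · exact Or.inr (hanti i j h)
        · exact Or.inl (hanti j i h)
      have hιne : Nonempty ((#↥D).ord.ToType) := Nonempty.map e.symm hne.to_subtype
      obtain ⟨b, hb⟩ := hC _ (Set.range_nonempty _) hchain
      refine ⟨b, fun x hx => ?_, fun c hc => hb.2 ?_⟩
      · have hxi : x ∈ f (e.symm ⟨x, hx⟩) := by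
          refine subset_cl _ _ _ ⟨⟨e.symm ⟨x, hx⟩, Set.self_mem_Iic, ?_⟩, hx⟩
          simp
        exact (hb.1 ⟨e.symm ⟨x, hx⟩, rfl⟩).trans ((haglb _).1 hxi)
      · rintro _ ⟨i, rfl⟩
        exact (haglb i).2 fun y hy => hc (hfD i hy)

end DownDirectedInfAux

theorem downDirected_inf_iff_chain_inf {P : Type*} [PartialOrder P] :
    (∀ D : Set P, D.Nonempty → DirectedOn (· ≥ ·) D → ∃ a, IsGLB D a) ↔
      (∀ C : Set P, C.Nonempty → IsChain (· ≤ ·) C → ∃ a, IsGLB C a) := by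
  constructor
  · intro h C hne hch
    refine h C hne fun x hx y hy => ?_
    rcases hch.total hx hy with h1 | h1
    · exact ⟨x, hx, le_rfl, h1⟩
    · exact ⟨y, hy, h1, le_rfl⟩
  · intro hC D hne hdir
    exact DownDirectedInfAux.glb_of_chains hC (#↥D) D le_rfl hne hdir
end

section
/- In a V-metric space (E,d) over a complete involutive ordered monoid V, if (E,d) is hyperconvex and an intersection of balls A is equally centered (δ(A) = r(A)), then the diameter δ(A) is inaccessible in V. -/
theorem equally_centered_in_hyperconvex_inaccessible (E V : Type*) [CompleteLattice V]
    (op : V → V → V) (conj : V → V)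
    (hassoc : ∀ u v w, op (op u v) w = op u (op v w))
    (hneutl : ∀ v, op ⊥ v = v) (hneutr : ∀ v, op v ⊥ = v)
    (hmono : ∀ u v u' v', u ≤ u' → v ≤ v' → op u v ≤ op u' v')
    (hconjmono : ∀ u v, u ≤ v → conj u ≤ conj v)
    (hconjconj : ∀ v, conj (conj v) = v)
    (hconjop : ∀ u v, conj (op u v) = op (conj v) (conj u))
    (d : E → E → V)
    (hd0 : ∀ x y, d x y ≤ ⊥ ↔ x = y)
    (htri : ∀ x y z, d x y ≤ op (d x z) (d z y))
    (hconjd : ∀ x y, d x y = conj (d y x))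
    (hhyper : ∀ S : Set (E × V),
      (∀ p ∈ S, ∀ q ∈ S, d p.1 q.1 ≤ op p.2 (conj q.2)) →
      (⋂ p ∈ S, {y : E | d p.1 y ≤ p.2}).Nonempty)
    (A : Set E)
    (hA : ∃ S : Set (E × V), A = ⋂ p ∈ S, {y : E | d p.1 y ≤ p.2})
    (heq : (⨆ x ∈ A, ⨆ y ∈ A, d x y) = sInf {v : V | ∃ x ∈ A, ∀ y ∈ A, d x y ≤ v}) :
    ∀ r : V, (⨆ x ∈ A, ⨆ y ∈ A, d x y) ≤ op r (conj r) →
      (⨆ x ∈ A, ⨆ y ∈ A, d x y) ≤ r := by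
  intro r hr
  rcases A.eq_empty_or_nonempty with hAe | ⟨a₀, ha₀⟩
  · simp [hAe]
  obtain ⟨S, hS⟩ := hA
  have hmemA : ∀ z, z ∈ A ↔ ∀ p ∈ S, d p.1 z ≤ p.2 := by
    intro z
    rw [hS]
    simp only [Set.mem_iInter, Set.mem_setOf_eq]
  have hball : ∀ a ∈ A, ∀ p ∈ S, d p.1 a ≤ p.2 := fun a ha p hp => (hmemA a).1 ha p hp
  have hcompat : ∀ p ∈ S ∪ (fun a => (a, r)) '' A, ∀ q ∈ S ∪ (fun a => (a, r)) '' A,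
      d p.1 q.1 ≤ op p.2 (conj q.2) := by
    intro p hp q hq
    rcases hp with hp | ⟨a, ha, rfl⟩ <;> rcases hq with hq | ⟨b, hb, rfl⟩
    · calc d p.1 q.1 ≤ op (d p.1 a₀) (d a₀ q.1) := htri _ _ _
        _ ≤ op p.2 (conj q.2) := hmono _ _ _ _ (hball a₀ ha₀ p hp)
            (by rw [hconjd]; exact hconjmono _ _ (hball a₀ ha₀ q hq))
    · calc d p.1 b ≤ p.2 := hball b hb p hp
        _ = op p.2 ⊥ := (hneutr _).symm
        _ ≤ op p.2 (conj r) := hmono _ _ _ _ le_rfl bot_le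
    · calc d a q.1 = conj (d q.1 a) := hconjd _ _
        _ ≤ conj q.2 := hconjmono _ _ (hball a ha q hq)
        _ = op ⊥ (conj q.2) := (hneutl _).symm
        _ ≤ op r (conj q.2) := hmono _ _ _ _ bot_le le_rfl
    · calc d a b ≤ ⨆ x ∈ A, ⨆ y ∈ A, d x y :=
          le_iSup₂_of_le a ha (le_iSup₂_of_le b hb le_rfl)
        _ ≤ op r (conj r) := hr
  obtain ⟨c, hc⟩ := hhyper _ hcompat
  simp only [Set.mem_iInter, Set.mem_setOf_eq] at hc
  have hcA : c ∈ A := (hmemA c).2 fun p hp => hc p (Or.inl hp)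
  have hac : ∀ a ∈ A, d a c ≤ r := fun a ha => hc (a, r) (Or.inr ⟨a, ha, rfl⟩)
  have hδconj : (⨆ x ∈ A, ⨆ y ∈ A, d x y) ≤ conj r := by
    rw [heq]
    exact sInf_le ⟨c, hcA, fun y hy => by
      rw [hconjd]; exact hconjmono _ _ (hac y hy)⟩
  have hself : (⨆ x ∈ A, ⨆ y ∈ A, d x y) ≤ conj (⨆ x ∈ A, ⨆ y ∈ A, d x y) := by
    refine iSup₂_le fun x hx => iSup₂_le fun y hy => ?_
    rw [hconjd]
    exact hconjmono _ _ (le_iSup₂_of_le y hy (le_iSup₂_of_le x hx le_rfl))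
  calc (⨆ x ∈ A, ⨆ y ∈ A, d x y) ≤ conj (⨆ x ∈ A, ⨆ y ∈ A, d x y) := hself
    _ ≤ conj (conj r) := hconjmono _ _ hδconj
    _ = r := hconjconj r
end

section
/- Let Λ = {+,-} and order the set Λ* of finite words over Λ by the subword (subsequence) ordering. Every element v of the MacNeille completion of (Λ*, ≤) of the form ↑u for a nonempty word u is accessible: there exists a finitely generated upper set r such that ↑u ⊄ r but every word in the concatenation r ⊕ r̄ lies above some element of ↑u, where r̄ is obtained by reversing words and swapping + and -, and X ⊕ Y := the upward closure of {xy : x ∈ X, y ∈ Y}. Concretely: for every nonempty word u over {+,-} there exists a word u' with u ≰ u' (subword order) and u ≤ u'·conj(u'), where conj(u') reverses u' and swaps its letters. -/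
theorem accessible_words (u : List Bool) (hu : u ≠ []) :
    ∃ u' : List Bool, ¬ u.Sublist u' ∧
      u.Sublist (u' ++ (u'.reverse.map (fun b => !b))) := by
  obtain ⟨v, b, rfl⟩ := (List.eq_nil_or_concat u).resolve_left hu
  rw [List.concat_eq_append]
  refine ⟨(!b) :: v, ?_, ?_⟩
  · intro h
    have := h.count_le b
    simp [List.count_cons, List.count_append, Bool.eq_not_self] at this
  · have : (((!b) :: v).reverse.map (fun b => !b)) =
        v.reverse.map (fun b => !b) ++ [b] := by
      simp
    rw [this]
    exact ((List.sublist_cons_self _ _).append_right _).trans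
      ((List.Sublist.refl _).append (List.sublist_append_right _ _))
end
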